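/- Let β ≥ 1/2. Then for every x > 0 and every integer k ≥ 2 the inequality (−1)^k ψ^{(k−1)}(x + β) ≤ (k−2)!/x^{k−1} holds. -/

import Mathlib

open Real

/-- The polygamma function `ψ^{(k)}`: the `k`-th derivative of the digamma function,
i.e. the `(k+1)`-st derivative of `ln ∘ Γ`. -/
noncomputable def polygamma (k : ℕ) : ℝ → ℝ :=
  iteratedDeriv (k + 1) (fun x : ℝ => Real.log (Real.Gamma x))

section Aux

open Filter Topology Set intervalIntegral

-- Summability of (x+n)^(-k) for k ≥ 2 (indeed k ≥ 2 in ℕ)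
lemma psummable {k : ℕ} (hk : 2 ≤ k) {x : ℝ} (hx : 0 < x) :
    Summable (fun n : ℕ => ((x + n) ^ k)⁻¹) := by
  have h := (Real.summable_one_div_nat_add_rpow x (k : ℝ)).mpr (by exact_mod_cast by omega)
  refine h.congr fun n => ?_
  have h1 : (0:ℝ) < (n:ℝ) + x := by positivity
  rw [one_div, abs_of_pos h1, Real.rpow_natCast ((n:ℝ)+x) k, add_comm x (n:ℝ)]

-- telescoping bound: ∑' n, (g n - g (n+1)) style partial sums
lemma tele_hasSum {x : ℝ} (hx : 0 < x) :
    HasSum (fun n : ℕ => (x + n)⁻¹ - (x + n + 1)⁻¹) x⁻¹ := by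
  have hpos : ∀ n : ℕ, (0:ℝ) < x + n := fun n => by positivity
  have hnn : ∀ n : ℕ, 0 ≤ (x + n)⁻¹ - (x + n + 1)⁻¹ := by
    intro n
    have := hpos n
    have h2 : (0:ℝ) < x + n + 1 := by positivity
    have : (x + n)⁻¹ ≥ (x + n + 1)⁻¹ := by
      apply inv_anti₀ this; linarith
    linarith
  have hsum : ∀ N : ℕ, ∑ i ∈ Finset.range N, ((x + i)⁻¹ - (x + i + 1)⁻¹) = x⁻¹ - (x + N)⁻¹ := by
    intro N
    have := Finset.sum_range_sub' (fun i : ℕ => (x + i)⁻¹) N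
    simp only [Nat.cast_zero, add_zero] at this
    rw [← this]
    exact Finset.sum_congr rfl fun i _ => by push_cast; ring_nf
  rw [hasSum_iff_tendsto_nat_of_nonneg hnn]
  simp_rw [hsum]
  have : Tendsto (fun N : ℕ => (x + N)⁻¹) atTop (𝓝 0) := by
    apply Tendsto.inv_tendsto_atTop
    exact tendsto_atTop_add_const_left _ x tendsto_natCast_atTop_atTop
  simpa using tendsto_const_nhds.sub this

lemma tangent_aux (j : ℕ) {u : ℝ} (hu : 0 < u) : 1 + j * (1 - u) ≤ (u ^ j)⁻¹ := by
  have ha : (-2:ℝ) ≤ (1 - u) / u := by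
    rw [le_div_iff₀ hu]; nlinarith
  have h1 := one_add_mul_le_pow ha j
  have h2 : 1 + (1 - u) / u = u⁻¹ := by field_simp; ring
  rw [h2, inv_pow] at h1
  refine le_trans ?_ h1
  have h3 : (1 - u) ≤ (1 - u) / u := by
    rw [le_div_iff₀ hu]; nlinarith [sq_nonneg (1 - u)]
  have : (j:ℝ) * (1 - u) ≤ j * ((1 - u) / u) :=
    mul_le_mul_of_nonneg_left h3 (by positivity)
  linarith

lemma tangent (k : ℕ) {m t : ℝ} (hm : 0 < m) (ht : 0 < t) :
    (m ^ k)⁻¹ + k * (m ^ (k + 1))⁻¹ * (m - t) ≤ (t ^ k)⁻¹ := by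
  have h := tangent_aux k (div_pos ht hm)
  rw [div_pow, inv_div] at h
  have htk : (0:ℝ) < t ^ k := by positivity
  have key : (1 + k * (1 - t / m)) * t ^ k ≤ m ^ k := (le_div_iff₀ htk).mp h
  have key' : (m + k * (m - t)) * t ^ k ≤ m ^ (k + 1) := by
    have h4 : (m + k * (m - t)) * t ^ k = ((1 + k * (1 - t / m)) * t ^ k) * m := by
      field_simp
    rw [h4, pow_succ]
    exact mul_le_mul_of_nonneg_right key hm.le
  rw [← sub_nonneg]
  have hrw : (t ^ k)⁻¹ - ((m ^ k)⁻¹ + k * (m ^ (k + 1))⁻¹ * (m - t))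
      = (m ^ (k + 1) - (m + k * (m - t)) * t ^ k) / (t ^ k * m ^ (k + 1)) := by
    field_simp; ring
  rw [hrw]
  exact div_nonneg (by linarith) (by positivity)

lemma hermite_hadamard (j : ℕ) (hj : 1 ≤ j) {a : ℝ} (ha : 0 < a) :
    (j : ℝ) * ((a + 1/2) ^ (j + 1))⁻¹ ≤ (a ^ j)⁻¹ - ((a + 1) ^ j)⁻¹ := by
  set m : ℝ := a + 1/2 with hm_def
  have hm : 0 < m := by positivity
  have hj' : (0:ℝ) < j := by exact_mod_cast hj
  have hle : a ≤ a + 1 := by linarith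
  have huIcc : uIcc a (a + 1) = Icc a (a + 1) := uIcc_of_le hle
  have hzero : (0:ℝ) ∉ uIcc a (a + 1) := by
    rw [huIcc]; rintro ⟨h1, -⟩; linarith
  have I1 : ∫ t in a..(a + 1), (t ^ (j + 1))⁻¹
      = ((a ^ j)⁻¹ - ((a + 1) ^ j)⁻¹) / j := by
    have hne : (-(j + 1 : ℕ) : ℤ) ≠ -1 := by omega
    have hz := integral_zpow (a := a) (b := a + 1) (n := -(j + 1 : ℕ)) (Or.inr ⟨hne, hzero⟩)
    rw [show (-(↑(j+1):ℤ) + 1) = -(j:ℤ) by push_cast; ring] at hz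
    rw [show ((↑(-(↑(j+1):ℤ)) : ℝ) + 1) = -(j:ℝ) by push_cast; ring] at hz
    simp_rw [zpow_neg, zpow_natCast] at hz
    rw [hz]; ring
  have I2 : ∫ t in a..(a + 1), ((m ^ (j + 1))⁻¹ + (j + 1 : ℕ) * (m ^ (j + 2))⁻¹ * (m - t))
      = (m ^ (j + 1))⁻¹ := by
    have h1 : ∫ t in a..(a + 1), (m - t) = 0 := by
      rw [intervalIntegral.integral_sub intervalIntegrable_const intervalIntegrable_id,
        integral_const, integral_id]
      simp
      ring
    rw [intervalIntegral.integral_add intervalIntegrable_const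
        (Continuous.intervalIntegrable (by continuity) _ _),
      intervalIntegral.integral_const_mul, h1, integral_const]
    simp
  have hmono : ∫ t in a..(a + 1), ((m ^ (j + 1))⁻¹ + (j + 1 : ℕ) * (m ^ (j + 2))⁻¹ * (m - t))
      ≤ ∫ t in a..(a + 1), (t ^ (j + 1))⁻¹ := by
    apply intervalIntegral.integral_mono_on hle
    · exact Continuous.intervalIntegrable (by continuity) _ _
    · apply ContinuousOn.intervalIntegrable
      rw [huIcc]
      exact ContinuousOn.inv₀ (continuousOn_pow _)
        (fun t ht => pow_ne_zero _ (ne_of_gt (lt_of_lt_of_le ha ht.1)))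
    · intro t ht
      have htpos : 0 < t := lt_of_lt_of_le ha ht.1
      exact tangent (j + 1) hm htpos
  rw [I1, I2] at hmono
  have h5 : (j:ℝ) * (((a ^ j)⁻¹ - ((a + 1) ^ j)⁻¹) / j) = (a ^ j)⁻¹ - ((a + 1) ^ j)⁻¹ := by
    field_simp
  calc (j : ℝ) * (m ^ (j + 1))⁻¹ ≤ j * (((a ^ j)⁻¹ - ((a + 1) ^ j)⁻¹) / j) :=
        mul_le_mul_of_nonneg_left hmono hj'.le
    _ = _ := h5

noncomputable def Pfun (k : ℕ) (x : ℝ) : ℝ := ∑' n : ℕ, ((x + n) ^ k)⁻¹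

noncomputable def Sfun (x : ℝ) : ℝ := ∑' n : ℕ, (((n:ℝ) + 1)⁻¹ - (x + n)⁻¹)

lemma Ssummable {x : ℝ} (hx : 0 < x) :
    Summable (fun n : ℕ => ((n:ℝ) + 1)⁻¹ - (x + n)⁻¹) := by
  have hc0 : 0 < min x 1 := lt_min hx one_pos
  have hbase : Summable (fun n : ℕ => (((n:ℝ) + 1) ^ 2)⁻¹) := by
    have h := (Real.summable_one_div_nat_add_rpow 1 2).mpr one_lt_two
    refine h.congr fun n => ?_
    have h1 : (0:ℝ) < (n:ℝ) + 1 := by positivity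
    rw [one_div, abs_of_pos h1, show ((2:ℝ)) = ((2:ℕ):ℝ) by norm_num,
      Real.rpow_natCast ((n:ℝ)+1) 2]
  apply Summable.of_norm_bounded
    (g := fun n : ℕ => (|x - 1| / min x 1) * (((n:ℝ) + 1) ^ 2)⁻¹) (hbase.mul_left _)
  intro n
  have hn0 : (0:ℝ) ≤ (n:ℝ) := Nat.cast_nonneg n
  have hn1 : (0:ℝ) < (n:ℝ) + 1 := by linarith
  have hxn : (0:ℝ) < x + n := by linarith
  have h1 : ((n:ℝ) + 1)⁻¹ - (x + n)⁻¹ = (x - 1) / (((n:ℝ) + 1) * (x + n)) := by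
    field_simp
    ring
  rw [h1]
  rw [norm_div, Real.norm_eq_abs, Real.norm_eq_abs,
    abs_of_pos (show (0:ℝ) < ((n:ℝ) + 1) * (x + n) by nlinarith)]
  have h2 : |x - 1| / min x 1 * (((n:ℝ) + 1) ^ 2)⁻¹ = |x - 1| / (min x 1 * ((n:ℝ) + 1) ^ 2) := by
    rw [div_eq_mul_inv, div_eq_mul_inv, mul_assoc, ← mul_inv]
  rw [h2]
  apply div_le_div_of_nonneg_left (abs_nonneg _) (mul_pos hc0 (pow_pos hn1 2))
  have hmx : min x 1 ≤ x := min_le_left _ _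
  have hm1 : min x 1 ≤ 1 := min_le_right _ _
  have h3 : (min x 1) * ((n:ℝ) + 1) ≤ x + n := by
    nlinarith [mul_le_mul_of_nonneg_right hm1 hn0]
  nlinarith [mul_le_mul_of_nonneg_left h3 hn1.le]

lemma SHasDeriv {x : ℝ} (hx : 0 < x) : HasDerivAt Sfun (Pfun 2 x) x := by
  have hx2 : 0 < x / 2 := half_pos hx
  have h := hasDerivAt_tsum_of_isPreconnected
    (psummable le_rfl hx2) isOpen_Ioi (convex_Ioi (x/2)).isPreconnected
    (g := fun (n : ℕ) (y : ℝ) => ((n:ℝ) + 1)⁻¹ - (y + n)⁻¹)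
    (g' := fun (n : ℕ) (y : ℝ) => ((y + n) ^ 2)⁻¹)
    (u := fun n : ℕ => ((x/2 + n) ^ 2)⁻¹)
    (y₀ := x) (y := x) ?_ ?_ (by simpa using hx2) (Ssummable hx) (by simpa using hx2)
  · exact h
  · intro n y hy
    have hy' : x/2 < y := hy
    have hn0 : (0:ℝ) ≤ (n:ℝ) := Nat.cast_nonneg n
    have hyn : (0:ℝ) < y + n := by linarith
    have h2 := (((hasDerivAt_id y).add_const (n:ℝ)).inv hyn.ne')
    have h3 := (hasDerivAt_const y (((n:ℝ) + 1)⁻¹)).sub h2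
    simp only [id_eq] at h3
    convert h3 using 1
    · rfl
    · ring
  · intro n y hy
    have hy' : x/2 < y := hy
    have hn0 : (0:ℝ) ≤ (n:ℝ) := Nat.cast_nonneg n
    have hyn : (0:ℝ) < y + n := by linarith
    have hxn : (0:ℝ) < x/2 + n := by linarith
    rw [Real.norm_eq_abs, abs_of_pos (inv_pos.mpr (pow_pos hyn 2))]
    exact inv_anti₀ (pow_pos hxn 2) (pow_le_pow_left₀ hxn.le (show x/2+(n:ℝ) ≤ y+n by linarith) 2)

lemma PHasDeriv {k : ℕ} (hk : 2 ≤ k) {x : ℝ} (hx : 0 < x) :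
    HasDerivAt (Pfun k) (-(k:ℝ) * Pfun (k+1) x) x := by
  have hx2 : 0 < x / 2 := half_pos hx
  have h := hasDerivAt_tsum_of_isPreconnected
    ((psummable (by omega : 2 ≤ k + 1) hx2).mul_left (k:ℝ))
    isOpen_Ioi (convex_Ioi (x/2)).isPreconnected
    (g := fun (n : ℕ) (y : ℝ) => ((y + n) ^ k)⁻¹)
    (g' := fun (n : ℕ) (y : ℝ) => -(k:ℝ) * ((y + n) ^ (k+1))⁻¹)
    (u := fun n : ℕ => (k:ℝ) * ((x/2 + n) ^ (k+1))⁻¹)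
    (y₀ := x) (y := x) ?_ ?_ (by simpa using hx2) (psummable hk hx) (by simpa using hx2)
  · have heq : ∑' n : ℕ, (-(k:ℝ) * ((x + n) ^ (k+1))⁻¹) = -(k:ℝ) * Pfun (k+1) x := by
      rw [tsum_mul_left]; rfl
    rw [heq] at h
    exact h
  · intro n y hy
    have hy' : x/2 < y := hy
    have hn0 : (0:ℝ) ≤ (n:ℝ) := Nat.cast_nonneg n
    have hyn : (0:ℝ) < y + n := by linarith
    have h2 := (((hasDerivAt_id y).add_const (n:ℝ)).pow k).inv (pow_ne_zero k hyn.ne')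
    simp only [id_eq] at h2
    refine h2.congr_deriv ?_
    show -((k:ℝ) * (y + n) ^ (k - 1) * 1) / ((y + n) ^ k) ^ 2 = -(k:ℝ) * ((y + n) ^ (k+1))⁻¹
    have hpow : ((y + n:ℝ) ^ k) ^ 2 = (y + n) ^ (k - 1) * (y + n) ^ (k + 1) := by
      rw [← pow_mul, ← pow_add]
      congr 1
      omega
    rw [hpow]
    field_simp
  · intro n y hy
    have hy' : x/2 < y := hy
    have hn0 : (0:ℝ) ≤ (n:ℝ) := Nat.cast_nonneg n
    have hyn : (0:ℝ) < y + n := by linarith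
    have hxn : (0:ℝ) < x/2 + n := by linarith
    rw [norm_mul, Real.norm_eq_abs, Real.norm_eq_abs,
      abs_of_pos (inv_pos.mpr (pow_pos hyn (k+1))), abs_neg,
      abs_of_nonneg (Nat.cast_nonneg (α := ℝ) k)]
    have := inv_anti₀ (pow_pos hxn (k+1)) (pow_le_pow_left₀ hxn.le (show x/2+(n:ℝ) ≤ y+n by linarith) (k+1))
    exact mul_le_mul_of_nonneg_left this (Nat.cast_nonneg k)

noncomputable def lgam : ℝ → ℝ := fun x : ℝ => Real.log (Real.Gamma x)

local notation "γ" => Real.eulerMascheroniConstant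

lemma lgam_differentiable {x : ℝ} (hx : 0 < x) : DifferentiableAt ℝ lgam x := by
  refine ((Real.differentiableAt_Gamma ?_).log (Real.Gamma_ne_zero ?_)) <;>
    exact fun m => ne_of_gt (by have : (0:ℝ) ≤ m := Nat.cast_nonneg m; linarith)

lemma lgam_rec {x : ℝ} (hx : 0 < x) : lgam (x + 1) = lgam x + Real.log x := by
  simp only [lgam, Real.Gamma_add_one hx.ne',
    Real.log_mul hx.ne' (Real.Gamma_pos_of_pos hx).ne', add_comm]

lemma deriv_lgam_rec {x : ℝ} (hx : 0 < x) :
    deriv lgam (x + 1) = deriv lgam x + 1 / x := by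
  rw [← deriv_comp_add_const, one_div, ← Real.deriv_log,
    ← deriv_add (lgam_differentiable hx) (Real.differentiableAt_log hx.ne')]
  apply Filter.EventuallyEq.deriv_eq
  filter_upwards [eventually_gt_nhds hx] with t ht
  exact lgam_rec ht

lemma deriv_lgam_one : deriv lgam 1 = -γ := by
  have h0 := Real.deriv_Gamma_nat 0
  simp only [Nat.cast_zero, zero_add, Nat.factorial_zero, Nat.cast_one, harmonic_zero,
    Rat.cast_zero, add_zero, one_mul] at h0
  have h1 : deriv lgam 1 = deriv Real.Gamma 1 / Real.Gamma 1 := by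
    apply deriv.log (Real.differentiableAt_Gamma ?_) (by rw [Real.Gamma_one]; norm_num)
    exact fun m => ne_of_gt (by have : (0:ℝ) ≤ m := Nat.cast_nonneg m; linarith)
  rw [h1, h0, Real.Gamma_one, div_one]

lemma deriv_lgam_mono {a b : ℝ} (ha : 0 < a) (hab : a ≤ b) :
    deriv lgam a ≤ deriv lgam b := by
  rcases eq_or_lt_of_le hab with rfl | hlt
  · rfl
  have hb : 0 < b := lt_trans ha hlt
  have hc : ConvexOn ℝ (Ioi 0) lgam := Real.convexOn_log_Gamma
  calc deriv lgam a ≤ slope lgam a b :=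
        hc.deriv_le_slope (mem_Ioi.mpr ha) (mem_Ioi.mpr hb) hlt (lgam_differentiable ha)
    _ ≤ deriv lgam b :=
        hc.slope_le_deriv (mem_Ioi.mpr ha) (mem_Ioi.mpr hb) hlt (lgam_differentiable hb)

lemma Sfun_rec {x : ℝ} (hx : 0 < x) : Sfun (x + 1) = Sfun x + 1 / x := by
  have hx1 : 0 < x + 1 := by linarith
  have h2 : ∑' n : ℕ, ((((n:ℝ) + 1)⁻¹ - (x + 1 + n)⁻¹) - (((n:ℝ) + 1)⁻¹ - (x + n)⁻¹))
      = Sfun (x + 1) - Sfun x := Summable.tsum_sub (Ssummable hx1) (Ssummable hx)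
  have h3 : ∑' n : ℕ, ((((n:ℝ) + 1)⁻¹ - (x + 1 + n)⁻¹) - (((n:ℝ) + 1)⁻¹ - (x + n)⁻¹))
      = ∑' n : ℕ, ((x + n)⁻¹ - (x + n + 1)⁻¹) := by
    apply tsum_congr
    intro n
    have : x + 1 + (n:ℝ) = x + n + 1 := by ring
    rw [this]
    ring
  have h4 := (tele_hasSum hx).tsum_eq
  rw [h3, h4] at h2
  rw [one_div]
  linarith

lemma Sfun_one : Sfun 1 = 0 := by
  have : ∀ n : ℕ, ((n:ℝ) + 1)⁻¹ - ((1:ℝ) + n)⁻¹ = 0 := fun n => by rw [add_comm]; ring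
  simp only [Sfun, this, tsum_zero]

lemma Sfun_mono {a b : ℝ} (ha : 0 < a) (hab : a ≤ b) : Sfun a ≤ Sfun b := by
  have hb : 0 < b := lt_of_lt_of_le ha hab
  apply Summable.tsum_le_tsum _ (Ssummable ha) (Ssummable hb)
  intro n
  have hn0 : (0:ℝ) ≤ n := Nat.cast_nonneg n
  have h1 : (0:ℝ) < a + n := by linarith
  have := inv_anti₀ h1 (by linarith : a + (n:ℝ) ≤ b + n)
  linarith

lemma deriv_lgam_nat (m : ℕ) : deriv lgam ((m:ℝ) + 1) = -γ + Sfun ((m:ℝ) + 1) := by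
  induction m with
  | zero => simp only [Nat.cast_zero, zero_add, deriv_lgam_one, Sfun_one, add_zero]
  | succ m ih =>
    have hm : (0:ℝ) < (m:ℝ) + 1 := by positivity
    have hcast : ((m + 1 : ℕ) : ℝ) + 1 = ((m:ℝ) + 1) + 1 := by push_cast; ring
    rw [hcast, deriv_lgam_rec hm, Sfun_rec hm, ih]
    ring

lemma Sfun_growth (M : ℕ) {y : ℝ} (hy : 0 < y) : Sfun (y + M) ≤ Sfun y + M / y := by
  induction M with
  | zero => simp
  | succ M ih =>
    have hyM : 0 < y + M := by have : (0:ℝ) ≤ M := Nat.cast_nonneg M; linarith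
    have hcast : y + ((M + 1 : ℕ) : ℝ) = (y + M) + 1 := by push_cast; ring
    rw [hcast, Sfun_rec hyM]
    have h1 : 1 / (y + (M:ℝ)) ≤ 1 / y := by
      apply one_div_le_one_div_of_le hy
      have : (0:ℝ) ≤ M := Nat.cast_nonneg M; linarith
    have : ((M + 1 : ℕ) : ℝ) / y = M / y + 1 / y := by push_cast; ring
    rw [this]
    linarith

lemma periodic_diff (n : ℕ) {x : ℝ} (hx : 0 < x) :
    deriv lgam (x + n) - Sfun (x + n) = deriv lgam x - Sfun x := by
  induction n with
  | zero => simp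
  | succ n ih =>
    have hxn : 0 < x + n := by have : (0:ℝ) ≤ n := Nat.cast_nonneg n; linarith
    have hcast : x + ((n + 1 : ℕ) : ℝ) = (x + n) + 1 := by push_cast; ring
    rw [hcast, deriv_lgam_rec hxn, Sfun_rec hxn]
    linarith

lemma deriv_lgam_eq {x : ℝ} (hx : 0 < x) : deriv lgam x = -γ + Sfun x := by
  set c : ℝ := deriv lgam x - Sfun x with hc
  suffices h : c = -γ by
    have : deriv lgam x = c + Sfun x := by rw [hc]; ring
    rw [this, h]
  set M : ℕ := ⌈x⌉₊ with hM
  have hxM : x ≤ M := Nat.le_ceil x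
  have key : ∀ n : ℕ, |c + γ| ≤ M / ((n:ℝ) + 1) := by
    intro n
    have hn0 : (0:ℝ) ≤ n := Nat.cast_nonneg n
    have hn1 : (0:ℝ) < (n:ℝ) + 1 := by linarith
    have hxn1 : 0 < x + ((n + 1 : ℕ) : ℝ) := by push_cast; linarith
    have hper := periodic_diff (n + 1) hx
    -- upper bound
    have hub : c ≤ -γ + M / ((n:ℝ) + 1) := by
      have h1 : deriv lgam (x + ((n + 1 : ℕ):ℝ)) ≤ deriv lgam (((M + n : ℕ):ℝ) + 1) := by
        apply deriv_lgam_mono hxn1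
        push_cast; linarith
      have h2 : Sfun ((n:ℝ) + 1) ≤ Sfun (x + ((n + 1 : ℕ):ℝ)) := by
        apply Sfun_mono hn1
        push_cast; linarith
      have h3 := deriv_lgam_nat (M + n)
      have h4 : Sfun (((M + n : ℕ):ℝ) + 1) ≤ Sfun ((n:ℝ) + 1) + M / ((n:ℝ) + 1) := by
        have := Sfun_growth M hn1
        have hcast : ((M + n : ℕ):ℝ) + 1 = ((n:ℝ) + 1) + M := by push_cast; ring
        rw [hcast]
        exact this
      rw [hc]
      linarith
    -- lower bound
    have hlb : -γ - M / ((n:ℝ) + 1) ≤ c := by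
      have h1 : deriv lgam ((n:ℝ) + 1) ≤ deriv lgam (x + ((n + 1 : ℕ):ℝ)) := by
        apply deriv_lgam_mono hn1
        push_cast; linarith
      have h2 : Sfun (x + ((n + 1 : ℕ):ℝ)) ≤ Sfun (((M + n : ℕ):ℝ) + 1) := by
        apply Sfun_mono hxn1
        push_cast; linarith
      have h3 := deriv_lgam_nat n
      have h4 : Sfun (((M + n : ℕ):ℝ) + 1) ≤ Sfun ((n:ℝ) + 1) + M / ((n:ℝ) + 1) := by
        have := Sfun_growth M hn1
        have hcast : ((M + n : ℕ):ℝ) + 1 = ((n:ℝ) + 1) + M := by push_cast; ring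
        rw [hcast]
        exact this
      rw [hc]
      linarith
    rw [abs_le]
    constructor <;> linarith
  have hlim : Tendsto (fun n : ℕ => (M:ℝ) / ((n:ℝ) + 1)) atTop (𝓝 0) := by
    have h2 := (tendsto_const_div_atTop_nhds_zero_nat (M:ℝ)).comp (tendsto_add_atTop_nat 1)
    refine h2.congr fun n => ?_
    simp only [Function.comp_apply]
    push_cast
    ring
  have habs : |c + γ| ≤ 0 := ge_of_tendsto hlim (Filter.Eventually.of_forall key)
  have : c + γ = 0 := abs_eq_zero.mp (le_antisymm habs (abs_nonneg _))
  linarith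


theorem iter_formula (m : ℕ) : ∀ x : ℝ, 0 < x →
    iteratedDeriv (m + 2) lgam x = (-1)^m * (Nat.factorial (m+1)) * Pfun (m+2) x := by
  induction m with
  | zero =>
    intro x hx
    rw [show (0+2) = 1 + 1 by rfl, iteratedDeriv_succ, iteratedDeriv_one]
    have hev : deriv lgam =ᶠ[𝓝 x] (fun y => -γ + Sfun y) := by
      filter_upwards [Ioi_mem_nhds hx] with y hy
      exact deriv_lgam_eq hy
    rw [hev.deriv_eq]
    have hD : HasDerivAt (fun y => -γ + Sfun y) (Pfun 2 x) x := (SHasDeriv hx).const_add (-γ)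
    rw [hD.deriv]
    norm_num
  | succ m ih =>
    intro x hx
    rw [show (m + 1 + 2) = (m + 2) + 1 by ring, iteratedDeriv_succ]
    have hev : deriv (iteratedDeriv (m+2) lgam) x
        = deriv (fun y => (-1)^m * (Nat.factorial (m+1) : ℝ) * Pfun (m+2) y) x := by
      apply Filter.EventuallyEq.deriv_eq
      filter_upwards [Ioi_mem_nhds hx] with y hy
      exact ih y hy
    rw [hev]
    have hD : HasDerivAt (fun y => (-1:ℝ)^m * (Nat.factorial (m+1) : ℝ) * Pfun (m+2) y)
        ((-1:ℝ)^m * (Nat.factorial (m+1) : ℝ) * (-((m:ℝ)+2) * Pfun (m+3) x)) x := by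
      have := (PHasDeriv (by omega : 2 ≤ m + 2) hx).const_mul
        ((-1:ℝ)^m * (Nat.factorial (m+1) : ℝ))
      refine this.congr_deriv ?_
      rw [show m + 2 + 1 = m + 3 from rfl]
      push_cast
      ring
    rw [hD.deriv]
    have hfac : (Nat.factorial (m+2) : ℝ) = ((m:ℝ) + 2) * (Nat.factorial (m+1)) := by
      rw [Nat.factorial_succ]
      push_cast
      ring
    rw [show m + 2 + 1 = m + 3 by ring, hfac]
    ring


end Aux

theorem stmt_7 (β : ℝ) (hβ : 1 / 2 ≤ β) (x : ℝ) (hx : 0 < x) (k : ℕ) (hk : 2 ≤ k) :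
    (-1 : ℝ) ^ k * polygamma (k - 1) (x + β)
      ≤ (Nat.factorial (k - 2) : ℝ) / x ^ (k - 1) := by

  obtain ⟨m, rfl⟩ : ∃ m, k = m + 2 := ⟨k - 2, by omega⟩
  have hxβ : 0 < x + β := by linarith
  have hx2 : 0 < x + 1/2 := by linarith
  have hpg : polygamma (m + 2 - 1) (x + β) = iteratedDeriv (m + 2) lgam (x + β) := rfl
  rw [hpg, iter_formula m (x + β) hxβ]
  have hsign : (-1:ℝ)^(m+2) * ((-1:ℝ)^m * (Nat.factorial (m+1):ℝ) * Pfun (m+2) (x+β))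
      = (Nat.factorial (m+1):ℝ) * Pfun (m+2) (x+β) := by
    have h1 : (-1:ℝ)^(m+2) * (-1:ℝ)^m = 1 := by
      rw [← pow_add]
      exact Even.neg_one_pow ⟨m + 1, by ring⟩
    calc (-1:ℝ)^(m+2) * ((-1:ℝ)^m * (Nat.factorial (m+1):ℝ) * Pfun (m+2) (x+β))
        = ((-1:ℝ)^(m+2) * (-1:ℝ)^m) * ((Nat.factorial (m+1):ℝ) * Pfun (m+2) (x+β)) := by ring
      _ = _ := by rw [h1]; ring
  rw [hsign]
  -- monotonicity in β
  have hmono : Pfun (m+2) (x+β) ≤ Pfun (m+2) (x+1/2) := by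
    apply Summable.tsum_le_tsum _ (psummable (by omega) hxβ) (psummable (by omega) hx2)
    intro n
    have hn0 : (0:ℝ) ≤ n := Nat.cast_nonneg n
    have h1 : (0:ℝ) < x + 1/2 + n := by linarith
    exact inv_anti₀ (pow_pos h1 (m+2))
      (pow_le_pow_left₀ h1.le (by linarith : x + 1/2 + (n:ℝ) ≤ x + β + n) (m+2))
  -- the key sum bound
  have key : ((m:ℝ)+1) * Pfun (m+2) (x+1/2) ≤ (x ^ (m+1))⁻¹ := by
    have heq : ((m:ℝ)+1) * Pfun (m+2) (x+1/2)
        = ∑' n : ℕ, ((m:ℝ)+1) * ((x + 1/2 + n) ^ (m+2))⁻¹ := by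
      rw [tsum_mul_left]
      rfl
    rw [heq]
    apply Real.tsum_le_of_sum_range_le
    · intro n
      have hn0 : (0:ℝ) ≤ n := Nat.cast_nonneg n
      have h1 : (0:ℝ) < x + 1/2 + n := by linarith
      positivity
    · intro N
      have hterm : ∀ i ∈ Finset.range N, ((m:ℝ)+1) * ((x + 1/2 + i) ^ (m+2))⁻¹
          ≤ ((x + i) ^ (m+1))⁻¹ - ((x + (i+1:ℕ)) ^ (m+1))⁻¹ := by
        intro i _
        have hi0 : (0:ℝ) ≤ i := Nat.cast_nonneg i
        have hxi : (0:ℝ) < x + i := by linarith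
        have h := hermite_hadamard (m+1) (by omega) hxi
        have e1 : x + (i:ℝ) + 1/2 = x + 1/2 + i := by ring
        have e2 : x + (i:ℝ) + 1 = x + ((i+1:ℕ):ℝ) := by push_cast; ring
        rw [e1, e2] at h
        have e3 : ((m+1:ℕ):ℝ) = (m:ℝ) + 1 := by push_cast; ring
        rw [e3, show m + 1 + 1 = m + 2 by ring] at h
        exact h
      calc ∑ i ∈ Finset.range N, ((m:ℝ)+1) * ((x + 1/2 + i) ^ (m+2))⁻¹
          ≤ ∑ i ∈ Finset.range N, (((x + i) ^ (m+1))⁻¹ - ((x + (i+1:ℕ)) ^ (m+1))⁻¹) :=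
            Finset.sum_le_sum hterm
        _ = ((x + (0:ℕ)) ^ (m+1))⁻¹ - ((x + (N:ℕ)) ^ (m+1))⁻¹ := by
            exact Finset.sum_range_sub' (fun i : ℕ => ((x + (i:ℕ)) ^ (m+1))⁻¹) N
        _ ≤ (x ^ (m+1))⁻¹ := by
            have hN0 : (0:ℝ) ≤ (N:ℕ) := Nat.cast_nonneg N
            have h1 : (0:ℝ) < x + (N:ℕ) := by linarith
            have h2 : (0:ℝ) ≤ ((x + (N:ℕ)) ^ (m+1))⁻¹ := by positivity
            simp only [Nat.cast_zero, add_zero]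
            linarith
  -- assemble
  have hP0 : 0 ≤ Pfun (m+2) (x+β) := by
    apply tsum_nonneg
    intro n
    have hn0 : (0:ℝ) ≤ n := Nat.cast_nonneg n
    have h1 : (0:ℝ) < x + β + n := by linarith
    positivity
  have hfac : (Nat.factorial (m + 2 - 1) : ℝ) = ((m:ℝ)+1) * (Nat.factorial (m + 2 - 2)) := by
    show (Nat.factorial (m+1) : ℝ) = ((m:ℝ)+1) * (Nat.factorial m)
    rw [Nat.factorial_succ]
    push_cast
    ring
  show (Nat.factorial (m+1):ℝ) * Pfun (m+2) (x+β) ≤ (Nat.factorial (m + 2 - 2) : ℝ) / x ^ (m + 2 - 1)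
  have e4 : (Nat.factorial (m+1):ℝ) = ((m:ℝ)+1) * (Nat.factorial m) := by
    rw [Nat.factorial_succ]; push_cast; ring
  rw [e4]
  have hfm : (0:ℝ) ≤ (Nat.factorial m : ℝ) := Nat.cast_nonneg _
  calc ((m:ℝ)+1) * (Nat.factorial m) * Pfun (m+2) (x+β)
      ≤ ((m:ℝ)+1) * (Nat.factorial m) * Pfun (m+2) (x+1/2) := by
        apply mul_le_mul_of_nonneg_left hmono (by positivity)
    _ = (Nat.factorial m : ℝ) * (((m:ℝ)+1) * Pfun (m+2) (x+1/2)) := by ring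
    _ ≤ (Nat.factorial m : ℝ) * (x ^ (m+1))⁻¹ := mul_le_mul_of_nonneg_left key hfm
    _ = (Nat.factorial (m + 2 - 2) : ℝ) / x ^ (m + 2 - 1) := by
        rw [show m + 2 - 2 = m from rfl, show m + 2 - 1 = m + 1 from rfl, div_eq_mul_inv]
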